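/- Let p be a prime and consider the ring R = F_p[F,V]/(FV, F·h(F), V·h(V)) for a polynomial h ∈ F_p[X] of degree D with h(0) ≠ 0. Then the socle of R at the maximal ideal (F,V), i.e., the annihilator of the ideal (F,V) in R, is 1-dimensional over F_p. If instead h(0) = 0, the socle is 2-dimensional over F_p. -/

import Mathlib

open Polynomial

namespace Socle12

variable {K : Type*} [Field K]

/-- every mv-polynomial in two variables decomposes as `P₁(X) + P₂(Y) + X*Y*C`. -/
theorem decomp (Q : MvPolynomial Bool K) :
    ∃ (P₁ P₂ : K[X]) (Cq : MvPolynomial Bool K),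
      Q = Polynomial.aeval (MvPolynomial.X true) P₁ +
          Polynomial.aeval (MvPolynomial.X false) P₂ +
          MvPolynomial.X true * MvPolynomial.X false * Cq := by
  induction Q using MvPolynomial.induction_on with
  | C a =>
      exact ⟨Polynomial.C a, 0, 0, by simp [MvPolynomial.algebraMap_eq]⟩
  | add q1 q2 h1 h2 =>
      obtain ⟨a1, b1, c1, e1⟩ := h1
      obtain ⟨a2, b2, c2, e2⟩ := h2
      exact ⟨a1 + a2, b1 + b2, c1 + c2, by rw [e1, e2]; simp only [map_add]; ring⟩
  | mul_X q b hq =>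
      obtain ⟨a, b', c, e⟩ := hq
      have hb : Polynomial.aeval (MvPolynomial.X (R := K) false) b' =
          Polynomial.aeval (MvPolynomial.X false) b'.divX * MvPolynomial.X false +
            MvPolynomial.C (b'.coeff 0) := by
        conv_lhs => rw [← Polynomial.divX_mul_X_add b']
        simp [MvPolynomial.algebraMap_eq]
      have ha : Polynomial.aeval (MvPolynomial.X (R := K) true) a =
          Polynomial.aeval (MvPolynomial.X true) a.divX * MvPolynomial.X true +
            MvPolynomial.C (a.coeff 0) := by
        conv_lhs => rw [← Polynomial.divX_mul_X_add a]
        simp [MvPolynomial.algebraMap_eq]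
      cases b with
      | true =>
          refine ⟨(a + Polynomial.C (b'.coeff 0)) * Polynomial.X, 0,
            c * MvPolynomial.X true + Polynomial.aeval (MvPolynomial.X false) b'.divX, ?_⟩
          rw [e, hb]
          simp only [map_add, map_mul, Polynomial.aeval_X, Polynomial.aeval_C,
            MvPolynomial.algebraMap_eq, map_zero]
          ring
      | false =>
          refine ⟨0, (b' + Polynomial.C (a.coeff 0)) * Polynomial.X, 0 +
            (Polynomial.aeval (MvPolynomial.X true) a.divX + c * MvPolynomial.X false), ?_⟩
          rw [e, ha]
          simp only [map_add, map_mul, Polynomial.aeval_X, Polynomial.aeval_C,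
            MvPolynomial.algebraMap_eq, map_zero]
          ring

set_option maxHeartbeats 1000000 in
theorem main (h : K[X]) (hh : h ≠ 0)
    (I : Ideal (MvPolynomial Bool K))
    (hI : I = Ideal.span {MvPolynomial.X true * MvPolynomial.X false,
      MvPolynomial.X true * Polynomial.aeval (MvPolynomial.X true) h,
      MvPolynomial.X false * Polynomial.aeval (MvPolynomial.X false) h}) :
    (h.eval 0 ≠ 0 →
      Module.finrank K
        ↥(LinearMap.ker
            (LinearMap.mulLeft K (Ideal.Quotient.mk I (MvPolynomial.X true))) ⊓
          LinearMap.ker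
            (LinearMap.mulLeft K (Ideal.Quotient.mk I (MvPolynomial.X false)))) = 1) ∧
    (h.eval 0 = 0 →
      Module.finrank K
        ↥(LinearMap.ker
            (LinearMap.mulLeft K (Ideal.Quotient.mk I (MvPolynomial.X true))) ⊓
          LinearMap.ker
            (LinearMap.mulLeft K (Ideal.Quotient.mk I (MvPolynomial.X false)))) = 2) := by
  classical
  set f : K[X] := Polynomial.X * h with hf
  set A := AdjoinRoot f with hA
  set r : A := AdjoinRoot.root f with hr
  -- the evaluation homomorphism
  set ψ₀ : MvPolynomial Bool K →ₐ[K] A × A :=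
    MvPolynomial.aeval (fun b => if b then ((r, 0) : A × A) else ((0, r) : A × A)) with hψ₀
  have hψ₀t : ψ₀ (MvPolynomial.X true) = (r, 0) := by simp [hψ₀]
  have hψ₀f : ψ₀ (MvPolynomial.X false) = (0, r) := by simp [hψ₀]
  have haev0 : ∀ g : K[X], Polynomial.aeval (0 : A) g = algebraMap K A (g.eval 0) := by
    intro g
    have := (Polynomial.aeval_algHom_apply (IsScalarTower.toAlgHom K K A) 0 g)
    simpa using this
  have hprod : ∀ (x : A × A) (g : K[X]),
      Polynomial.aeval x g = (Polynomial.aeval x.1 g, Polynomial.aeval x.2 g) := by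
    intro x g
    exact Prod.ext (Polynomial.aeval_algHom_apply (AlgHom.fst K A A) x g).symm
      (Polynomial.aeval_algHom_apply (AlgHom.snd K A A) x g).symm
  have hψaX : ∀ g : K[X], ψ₀ (Polynomial.aeval (MvPolynomial.X true) g) =
      (AdjoinRoot.mk f g, algebraMap K A (g.eval 0)) := by
    intro g
    rw [← Polynomial.aeval_algHom_apply ψ₀ (MvPolynomial.X true) g, hψ₀t, hprod, hr]
    simp only [haev0]
    exact Prod.ext (AdjoinRoot.aeval_eq g) rfl
  have hψaY : ∀ g : K[X], ψ₀ (Polynomial.aeval (MvPolynomial.X false) g) =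
      (algebraMap K A (g.eval 0), AdjoinRoot.mk f g) := by
    intro g
    rw [← Polynomial.aeval_algHom_apply ψ₀ (MvPolynomial.X false) g, hψ₀f, hprod, hr]
    simp only [haev0]
    exact Prod.ext rfl (AdjoinRoot.aeval_eq g)
  have hXmul : r * AdjoinRoot.mk f h = 0 := by
    rw [hr, ← AdjoinRoot.mk_X (f := f), ← map_mul]
    exact AdjoinRoot.mk_self
  have hmkh : AdjoinRoot.mk f h ≠ 0 := by
    intro hc
    have hdvd : f ∣ h := AdjoinRoot.mk_eq_zero.mp hc
    have h1 : f.natDegree ≤ h.natDegree := Polynomial.natDegree_le_of_dvd hdvd hh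
    have h2 : f.natDegree = 1 + h.natDegree := by
      rw [hf, Polynomial.natDegree_mul Polynomial.X_ne_zero hh, Polynomial.natDegree_X]
    omega
  have hker : ∀ a ∈ I, ψ₀ a = 0 := by
    have hle : I ≤ RingHom.ker (ψ₀.toRingHom) := by
      rw [hI, Ideal.span_le]
      intro x hx
      simp only [Set.mem_insert_iff, Set.mem_singleton_iff] at hx
      simp only [SetLike.mem_coe, RingHom.mem_ker, AlgHom.toRingHom_eq_coe, RingHom.coe_coe]
      rcases hx with rfl | rfl | rfl
      · rw [map_mul, hψ₀t, hψ₀f, Prod.mk_mul_mk]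
        simp
      · rw [map_mul, hψ₀t, hψaX, Prod.mk_mul_mk]
        simp [hXmul]
      · rw [map_mul, hψ₀f, hψaY, Prod.mk_mul_mk]
        simp [hXmul, mul_comm r]
    intro a ha
    exact hle ha
  set ψ : (MvPolynomial Bool K ⧸ I) →ₐ[K] A × A := Ideal.Quotient.liftₐ I ψ₀ hker with hψ
  have hψmk : ∀ Q, ψ (Ideal.Quotient.mk I Q) = ψ₀ Q := by
    intro Q
    rw [hψ]
    rfl
  have hmemI : ∀ Q : MvPolynomial Bool K, ψ₀ Q = 0 → Q ∈ I := by
    intro Q hQ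
    obtain ⟨P₁, P₂, Cq, rfl⟩ := decomp Q
    have hXY : ψ₀ (MvPolynomial.X true * MvPolynomial.X false) = 0 := by
      rw [map_mul, hψ₀t, hψ₀f, Prod.mk_mul_mk]; simp
    rw [map_add, map_add, map_mul, hXY, zero_mul, add_zero, hψaX, hψaY] at hQ
    have h1 : AdjoinRoot.mk f (P₁ + Polynomial.C (P₂.eval 0)) = 0 := by
      have := congrArg Prod.fst hQ
      simp only [Prod.fst_add, Prod.fst_zero] at this
      rw [map_add, AdjoinRoot.mk_C]; exact this
    have h2 : AdjoinRoot.mk f (P₂ + Polynomial.C (P₁.eval 0)) = 0 := by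
      have := congrArg Prod.snd hQ
      simp only [Prod.snd_add, Prod.snd_zero] at this
      rw [map_add, AdjoinRoot.mk_C, add_comm]; exact this
    obtain ⟨q₁, hq₁⟩ := AdjoinRoot.mk_eq_zero.mp h1
    obtain ⟨q₂, hq₂⟩ := AdjoinRoot.mk_eq_zero.mp h2
    have he : P₁.eval 0 + P₂.eval 0 = 0 := by
      have := congrArg (Polynomial.eval 0) hq₁
      simpa [hf] using this
    have hrw : Polynomial.aeval (MvPolynomial.X (R := K) true) P₁ +
        Polynomial.aeval (MvPolynomial.X (R := K) false) P₂ =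
        Polynomial.aeval (MvPolynomial.X true) (P₁ + Polynomial.C (P₂.eval 0)) +
        Polynomial.aeval (MvPolynomial.X false) (P₂ + Polynomial.C (P₁.eval 0)) := by
      simp only [map_add, Polynomial.aeval_C, MvPolynomial.algebraMap_eq]
      have hc : MvPolynomial.C (σ := Bool) (P₂.eval 0) + MvPolynomial.C (P₁.eval 0) = 0 := by
        rw [← MvPolynomial.C_add, add_comm, he, MvPolynomial.C_0]
      linear_combination -hc
    rw [hrw, hq₁, hq₂, hI]
    have m1 : Polynomial.aeval (MvPolynomial.X (R := K) true) (f * q₁) ∈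
        Ideal.span {MvPolynomial.X true * MvPolynomial.X false,
          MvPolynomial.X true * Polynomial.aeval (MvPolynomial.X true) h,
          MvPolynomial.X false * Polynomial.aeval (MvPolynomial.X false) h} := by
      have : Polynomial.aeval (MvPolynomial.X (R := K) true) (f * q₁) =
          (MvPolynomial.X true * Polynomial.aeval (MvPolynomial.X true) h) *
            Polynomial.aeval (MvPolynomial.X true) q₁ := by
        rw [hf]; simp only [map_mul, Polynomial.aeval_X]; try ring
      rw [this]
      exact Ideal.mul_mem_right _ _ (Ideal.subset_span (by simp))
    have m2 : Polynomial.aeval (MvPolynomial.X (R := K) false) (f * q₂) ∈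
        Ideal.span {MvPolynomial.X true * MvPolynomial.X false,
          MvPolynomial.X true * Polynomial.aeval (MvPolynomial.X true) h,
          MvPolynomial.X false * Polynomial.aeval (MvPolynomial.X false) h} := by
      have : Polynomial.aeval (MvPolynomial.X (R := K) false) (f * q₂) =
          (MvPolynomial.X false * Polynomial.aeval (MvPolynomial.X false) h) *
            Polynomial.aeval (MvPolynomial.X false) q₂ := by
        rw [hf]; simp only [map_mul, Polynomial.aeval_X]; try ring
      rw [this]
      exact Ideal.mul_mem_right _ _ (Ideal.subset_span (by simp))
    have m3 : MvPolynomial.X (R := K) true * MvPolynomial.X false * Cq ∈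
        Ideal.span {MvPolynomial.X true * MvPolynomial.X false,
          MvPolynomial.X true * Polynomial.aeval (MvPolynomial.X true) h,
          MvPolynomial.X false * Polynomial.aeval (MvPolynomial.X false) h} :=
      Ideal.mul_mem_right _ _ (Ideal.subset_span (by simp))
    exact add_mem (add_mem m1 m2) m3
  have hinj : Function.Injective ψ := by
    rw [injective_iff_map_eq_zero]
    intro x hx
    obtain ⟨Q, rfl⟩ := Ideal.Quotient.mk_surjective x
    rw [hψmk] at hx
    exact (Ideal.Quotient.eq_zero_iff_mem).mpr (hmemI Q hx)
  -- evaluation at 0 on A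
  have hfaev : Polynomial.aeval (0 : K) f = 0 := by rw [hf]; simp
  set ε : A →ₐ[K] K := AdjoinRoot.liftAlgHom f (Algebra.ofId K K) 0 (by rw [hf]; simp) with hεdef
  have hε : ∀ g : K[X], ε (AdjoinRoot.mk f g) = g.eval 0 := by
    intro g
    rw [hεdef, AdjoinRoot.liftAlgHom_mk]
    simp [Polynomial.coeff_zero_eq_eval_zero]
  have hXY0 : ψ₀ (MvPolynomial.X true * MvPolynomial.X false) = 0 := by
    rw [map_mul, hψ₀t, hψ₀f, Prod.mk_mul_mk]; simp
  have hconst : ∀ x : MvPolynomial Bool K ⧸ I, ε ((ψ x).1) = ε ((ψ x).2) := by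
    intro x
    obtain ⟨Q, rfl⟩ := Ideal.Quotient.mk_surjective x
    obtain ⟨P₁, P₂, Cq, rfl⟩ := decomp Q
    rw [hψmk, map_add, map_add, map_mul, hXY0, zero_mul, add_zero, hψaX, hψaY]
    simp only [Prod.fst_add, Prod.snd_add, map_add, hε, AlgHom.commutes,
      Algebra.algebraMap_self, RingHom.id_apply]
    try ring
  have hann : ∀ u : A, r * u = 0 → ∃ s : K, u = s • AdjoinRoot.mk f h := by
    intro u hu
    obtain ⟨g, rfl⟩ := AdjoinRoot.mk_surjective u
    have hz : AdjoinRoot.mk f (Polynomial.X * g) = 0 := by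
      rw [map_mul, AdjoinRoot.mk_X]; exact hu
    have hdvd : Polynomial.X * h ∣ Polynomial.X * g := AdjoinRoot.mk_eq_zero.mp hz
    have hdg : h ∣ g := (mul_dvd_mul_iff_left (Polynomial.X_ne_zero (R := K))).mp hdvd
    obtain ⟨q, rfl⟩ := hdg
    refine ⟨q.eval 0, ?_⟩
    obtain ⟨v, hv⟩ : Polynomial.X ∣ (q - Polynomial.C (q.eval 0)) := by
      rw [Polynomial.X_dvd_iff]
      simp [Polynomial.coeff_zero_eq_eval_zero]
    have hq : h * q = Polynomial.C (q.eval 0) * h + f * v := by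
      rw [hf]; linear_combination h * hv
    have hfv : AdjoinRoot.mk f (f * v) = 0 := by
      rw [map_mul, AdjoinRoot.mk_self, zero_mul]
    rw [hq, map_add, hfv, add_zero, map_mul]
    simp [Algebra.smul_def, AdjoinRoot.algebraMap_eq]
  have hψF : ψ (Ideal.Quotient.mk I (MvPolynomial.X true)) = (r, 0) := by
    rw [hψmk]; exact hψ₀t
  have hψV : ψ (Ideal.Quotient.mk I (MvPolynomial.X false)) = (0, r) := by
    rw [hψmk]; exact hψ₀f
  set N := LinearMap.ker (LinearMap.mulLeft K (Ideal.Quotient.mk I (MvPolynomial.X true))) ⊓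
      LinearMap.ker (LinearMap.mulLeft K (Ideal.Quotient.mk I (MvPolynomial.X false))) with hNdef
  have hNmem : ∀ x, x ∈ N ↔ (r * (ψ x).1 = 0 ∧ r * (ψ x).2 = 0) := by
    intro x
    have key1 : ψ ((Ideal.Quotient.mk I (MvPolynomial.X true)) * x) = (r * (ψ x).1, 0) := by
      rw [map_mul, hψF]
      exact Prod.ext (by simp) (by simp)
    have key2 : ψ ((Ideal.Quotient.mk I (MvPolynomial.X false)) * x) = (0, r * (ψ x).2) := by
      rw [map_mul, hψV]
      exact Prod.ext (by simp) (by simp)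
    have e1 : (Ideal.Quotient.mk I (MvPolynomial.X true)) * x = 0 ↔ r * (ψ x).1 = 0 := by
      constructor
      · intro hx0
        rw [hx0, map_zero] at key1
        simpa using congrArg Prod.fst key1.symm
      · intro hr0
        apply hinj
        rw [key1, hr0, map_zero]
        rfl
    have e2 : (Ideal.Quotient.mk I (MvPolynomial.X false)) * x = 0 ↔ r * (ψ x).2 = 0 := by
      constructor
      · intro hx0
        rw [hx0, map_zero] at key2
        simpa using congrArg Prod.snd key2.symm
      · intro hr0
        apply hinj
        rw [key2, hr0, map_zero]
        rfl
    rw [hNdef, Submodule.mem_inf, LinearMap.mem_ker, LinearMap.mem_ker,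
      LinearMap.mulLeft_apply, LinearMap.mulLeft_apply]
    exact and_congr e1 e2
  set w₁ := Ideal.Quotient.mk I (Polynomial.aeval (MvPolynomial.X true) h) with hw₁def
  set w₂ := Ideal.Quotient.mk I (Polynomial.aeval (MvPolynomial.X false) h) with hw₂def
  have hψw₁ : ψ w₁ = (AdjoinRoot.mk f h, algebraMap K A (h.eval 0)) := by
    rw [hw₁def, hψmk, hψaX]
  have hψw₂ : ψ w₂ = (algebraMap K A (h.eval 0), AdjoinRoot.mk f h) := by
    rw [hw₂def, hψmk, hψaY]
  constructor
  · -- h(0) ≠ 0 : socle is the span of w₁ + w₂ - h(0) • 1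
    intro h0
    set w := w₁ + w₂ - (h.eval 0) • 1 with hwdef
    have hψw : ψ w = (AdjoinRoot.mk f h, AdjoinRoot.mk f h) := by
      rw [hwdef, map_sub, map_add, hψw₁, hψw₂, map_smul, map_one]
      refine Prod.ext ?_ ?_ <;>
        simp [Algebra.algebraMap_eq_smul_one]
    have hwN : w ∈ N := by
      rw [hNmem, hψw]
      exact ⟨hXmul, hXmul⟩
    have hwne : w ≠ 0 := by
      intro hc
      rw [hc, map_zero] at hψw
      exact hmkh (by simpa using congrArg Prod.fst hψw.symm)
    have hspan : N = Submodule.span K {w} := by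
      apply le_antisymm
      · intro x hx
        rw [hNmem] at hx
        obtain ⟨s, hs⟩ := hann _ hx.1
        obtain ⟨t, ht⟩ := hann _ hx.2
        have hst : s = t := by
          have hc := hconst x
          rw [hs, ht] at hc
          have : s * h.eval 0 = t * h.eval 0 := by
            simpa [map_smul, hε, smul_eq_mul] using hc
          exact mul_right_cancel₀ h0 this
        have hxe : ψ x = ψ (s • w) := by
          rw [map_smul, hψw, show ψ x = ((ψ x).1, (ψ x).2) from rfl, hs, ht, ← hst]
          rfl
        rw [hinj hxe]
        exact Submodule.smul_mem _ _ (Submodule.mem_span_singleton_self w)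
      · rw [Submodule.span_le, Set.singleton_subset_iff]
        exact hwN
    rw [hspan]
    exact finrank_span_singleton hwne
  · -- h(0) = 0 : socle is spanned by w₁ and w₂
    intro h0
    have hψw₁' : ψ w₁ = (AdjoinRoot.mk f h, 0) := by rw [hψw₁, h0, map_zero]
    have hψw₂' : ψ w₂ = (0, AdjoinRoot.mk f h) := by rw [hψw₂, h0, map_zero]
    have hw₁N : w₁ ∈ N := by
      rw [hNmem, hψw₁']
      exact ⟨hXmul, by simp⟩
    have hw₂N : w₂ ∈ N := by
      rw [hNmem, hψw₂']
      exact ⟨by simp, hXmul⟩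
    have hspan : N = Submodule.span K {w₁, w₂} := by
      apply le_antisymm
      · intro x hx
        rw [hNmem] at hx
        obtain ⟨s, hs⟩ := hann _ hx.1
        obtain ⟨t, ht⟩ := hann _ hx.2
        have hxe : ψ x = ψ (s • w₁ + t • w₂) := by
          rw [map_add, map_smul, map_smul, hψw₁', hψw₂',
            show ψ x = ((ψ x).1, (ψ x).2) from rfl, hs, ht]
          refine Prod.ext ?_ ?_ <;> simp
        rw [hinj hxe]
        exact Submodule.add_mem _
          (Submodule.smul_mem _ _ (Submodule.subset_span (by simp)))
          (Submodule.smul_mem _ _ (Submodule.subset_span (by simp)))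
      · rw [Submodule.span_le]
        intro y hy
        simp only [Set.mem_insert_iff, Set.mem_singleton_iff] at hy
        rcases hy with rfl | rfl
        · exact hw₁N
        · exact hw₂N
    have hli : LinearIndependent K ![w₁, w₂] := by
      rw [LinearIndependent.pair_iff]
      intro s t hst
      have := congrArg ψ hst
      rw [map_add, map_smul, map_smul, hψw₁', hψw₂', map_zero] at this
      have h1 : s • AdjoinRoot.mk f h = 0 := by
        simpa only [Prod.fst_add, Prod.smul_fst, Prod.fst_zero, smul_zero, add_zero]
          using congrArg Prod.fst this
      have h2 : t • AdjoinRoot.mk f h = 0 := by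
        simpa only [Prod.snd_add, Prod.smul_snd, Prod.snd_zero, smul_zero, zero_add]
          using congrArg Prod.snd this
      constructor
      · rcases smul_eq_zero.mp h1 with hs | hs
        · exact hs
        · exact absurd hs hmkh
      · rcases smul_eq_zero.mp h2 with hs | hs
        · exact hs
        · exact absurd hs hmkh
    have hrange : ({w₁, w₂} : Set (MvPolynomial Bool K ⧸ I)) = Set.range ![w₁, w₂] := by
      ext y
      simp [Fin.exists_fin_two, or_comm]
    rw [hspan, hrange]
    simpa using finrank_span_eq_card hli

end Socle12


/-- Let `R = 𝔽_p[F,V]/(FV, F·h(F), V·h(V))` with `h` a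
nonzero polynomial of degree `D` over `𝔽_p`. The socle of `R` at the maximal
ideal `(F,V)`, i.e. `ker(F·) ∩ ker(V·)`, is `1`-dimensional over `𝔽_p` when
`h(0) ≠ 0`, and `2`-dimensional when `h(0) = 0`. -/
theorem socle_dimension
    (p : ℕ) [Fact p.Prime]
    (D : ℕ) (h : Polynomial (ZMod p)) (hh : h ≠ 0) (hdeg : h.natDegree = D)
    (F V : MvPolynomial Bool (ZMod p))
    (hF : F = MvPolynomial.X true) (hV : V = MvPolynomial.X false)
    (I : Ideal (MvPolynomial Bool (ZMod p)))
    (hI : I = Ideal.span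
      {F * V, F * Polynomial.aeval F h, V * Polynomial.aeval V h}) :
    (Polynomial.eval 0 h ≠ 0 →
      Module.finrank (ZMod p)
        ↥(LinearMap.ker
            (LinearMap.mulLeft (ZMod p) (Ideal.Quotient.mk I F)) ⊓
          LinearMap.ker
            (LinearMap.mulLeft (ZMod p) (Ideal.Quotient.mk I V))) = 1) ∧
    (Polynomial.eval 0 h = 0 →
      Module.finrank (ZMod p)
        ↥(LinearMap.ker
            (LinearMap.mulLeft (ZMod p) (Ideal.Quotient.mk I F)) ⊓
          LinearMap.ker
            (LinearMap.mulLeft (ZMod p) (Ideal.Quotient.mk I V))) = 2) := by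
  subst hF hV
  exact Socle12.main h hh I hI
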